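/- Let K/L be a finite extension of H-graded fields with f_{K/L} = 1 (i.e., K₁ = L₁), and let R be a graded valuation ring of L. Then R admits a unique extension to a graded valuation ring A of K, characterized by: a homogeneous element a ∈ K lies in A if and only if a^e ∈ R, where e = [K:L]. Moreover if R ⊆ R' are graded valuation rings of L with unique extensions A, A' to K, then A ⊆ A'. -/

import Mathlib

open scoped DirectSum

/-- An `H`-graded field: a nonzero commutative ring with an internal grading by the
commutative group `H` in which every nonzero homogeneous element is invertible
(with homogeneous inverse). -/
structure GradedField (H : Type*) [CommGroup H] [DecidableEq H] (K : Type*) [CommRing K] where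
  comp : H → AddSubgroup K
  one_mem : (1 : K) ∈ comp 1
  mul_mem : ∀ {g h : H} {x y : K}, x ∈ comp g → y ∈ comp h → x * y ∈ comp (g * h)
  isInternal : DirectSum.IsInternal fun h : H => comp h
  zero_ne_one : (0 : K) ≠ 1
  inv_mem : ∀ {h : H} {x : K}, x ∈ comp h → x ≠ 0 → ∃ y ∈ comp h⁻¹, x * y = 1

namespace GradedField

variable {H : Type*} [CommGroup H] [DecidableEq H] {K : Type*} [CommRing K] (F : GradedField H K)

/-- A homogeneous element. -/
def Homogeneous (x : K) : Prop := ∃ h, x ∈ F.comp h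

/-- A subring is graded if each of its elements is a sum of homogeneous elements of the
subring. -/
def IsGradedSubring (R : Subring K) : Prop :=
  ∀ x ∈ R, x ∈ AddSubgroup.closure {y : K | y ∈ R ∧ F.Homogeneous y}

/-- A graded subfield: a graded subring closed under inverses of nonzero homogeneous
elements. -/
structure IsGradedSubfield (L : Subring K) : Prop where
  graded : F.IsGradedSubring L
  inv_mem : ∀ x ∈ L, F.Homogeneous x → x ≠ 0 → Ring.inverse x ∈ L

/-- A graded valuation ring of the graded subfield `L`: a graded subring `R ⊆ L` such that
every nonzero homogeneous element of `L` lies in `R` or has its inverse in `R`. -/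
def IsGradedValRing (L R : Subring K) : Prop :=
  R ≤ L ∧ F.IsGradedSubring R ∧
    ∀ x ∈ L, F.Homogeneous x → x ≠ 0 → (x ∈ R ∨ Ring.inverse x ∈ R)

/-- The identity component `K₁`, as a subring. -/
def oneComponent : Subring K where
  carrier := F.comp 1
  one_mem' := F.one_mem
  mul_mem' := fun ha hb => by simpa using F.mul_mem ha hb
  add_mem' := fun ha hb => (F.comp 1).add_mem ha hb
  zero_mem' := (F.comp 1).zero_mem
  neg_mem' := fun ha => (F.comp 1).neg_mem ha

theorem mem_oneComponent {x : K} : x ∈ F.oneComponent ↔ x ∈ F.comp 1 := Iff.rfl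

/-- The value group `ρ(L^×) ⊆ H` of a graded subfield `L`. -/
def valueGroup (L : Subring K)
    (hL : ∀ x ∈ L, F.Homogeneous x → x ≠ 0 → Ring.inverse x ∈ L) : Subgroup H where
  carrier := {h | ∃ x ∈ F.comp h, x ≠ 0 ∧ x ∈ L}
  one_mem' := ⟨1, F.one_mem, Ne.symm F.zero_ne_one, L.one_mem⟩
  mul_mem' := by
    rintro g h ⟨x, hx, hx0, hxL⟩ ⟨y, hy, hy0, hyL⟩
    obtain ⟨x', hx', hxx'⟩ := F.inv_mem hx hx0
    obtain ⟨y', hy', hyy'⟩ := F.inv_mem hy hy0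
    refine ⟨x * y, F.mul_mem hx hy, ?_, L.mul_mem hxL hyL⟩
    intro h0
    have h1 : x * y * (x' * y') = 1 := by rw [mul_mul_mul_comm, hxx', hyy', one_mul]
    rw [h0, zero_mul] at h1
    exact F.zero_ne_one h1
  inv_mem' := by
    rintro g ⟨x, hx, hx0, hxL⟩
    obtain ⟨y, hy, hxy⟩ := F.inv_mem hx hx0
    have hu : IsUnit x := IsUnit.of_mul_eq_one y hxy
    have hyx : Ring.inverse x = y := by
      calc Ring.inverse x = Ring.inverse x * (x * y) := by rw [hxy, mul_one]
        _ = Ring.inverse x * x * y := by ring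
        _ = y := by rw [Ring.inverse_mul_cancel x hu, one_mul]
    refine ⟨y, hy, ?_, ?_⟩
    · intro h0; rw [h0, mul_zero] at hxy; exact F.zero_ne_one hxy
    · rw [← hyx]; exact hL x hxL ⟨g, hx⟩ hx0

/-- The value group `ρ(K^×)` of the whole graded field. -/
def fullValueGroup : Subgroup H :=
  F.valueGroup ⊤ (fun _ _ _ _ => Subring.mem_top _)

/-- `K₁` as a module over `L₁ = K₁ ∩ L`. -/
def oneSubmodule (L : Subring K) : Submodule ↥(F.oneComponent ⊓ L) K where
  carrier := F.comp 1
  add_mem' := fun ha hb => (F.comp 1).add_mem ha hb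
  zero_mem' := (F.comp 1).zero_mem
  smul_mem' := fun c x hx => by
    have hc : (c : K) ∈ F.comp 1 := ((Subring.mem_inf).mp c.2).1
    have := F.mul_mem hc hx
    simpa [Subring.smul_def] using this

/-- A graded automorphism: a ring automorphism preserving each graded component. -/
def IsGradedAut (σ : RingAut K) : Prop := ∀ (h : H) (x : K), x ∈ F.comp h → σ x ∈ F.comp h

end GradedField

/-- The fixed subring `K^G` of a group of ring automorphisms. -/
def fixedSubring {K : Type*} [CommRing K] (G : Subgroup (RingAut K)) : Subring K where
  carrier := {x | ∀ σ ∈ G, σ x = x}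
  one_mem' := fun σ _ => map_one σ
  mul_mem' := fun ha hb σ hσ => by rw [map_mul, ha σ hσ, hb σ hσ]
  add_mem' := fun ha hb σ hσ => by rw [map_add, ha σ hσ, hb σ hσ]
  zero_mem' := fun σ _ => map_zero σ
  neg_mem' := fun ha σ hσ => by rw [map_neg, ha σ hσ]

theorem mem_fixedSubring {K : Type*} [CommRing K] {G : Subgroup (RingAut K)} {x : K} :
    x ∈ fixedSubring G ↔ ∀ σ ∈ G, σ x = x := Iff.rfl


namespace GradedField

variable {H : Type*} [CommGroup H] [DecidableEq H] {K : Type*} [CommRing K]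
variable (F : GradedField H K)

/-- Decomposition of an element into its homogeneous components. -/
noncomputable def decompose (x : K) : ⨁ h : H, ↥(F.comp h) :=
  (Equiv.ofBijective _ F.isInternal).symm x

/-- The degree-`h` homogeneous component of `x`. -/
noncomputable def component (h : H) (x : K) : K := (F.decompose x h : K)

/-- The inertia subgroup of `G`: graded automorphisms in `G` acting trivially on `K₁`. -/
def inertia (G : Subgroup (RingAut K)) : Subgroup (RingAut K) where
  carrier := {σ | σ ∈ G ∧ ∀ x ∈ F.comp 1, σ x = x}
  one_mem' := ⟨G.one_mem, fun _ _ => rfl⟩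
  mul_mem' := fun {a b} ha hb => ⟨G.mul_mem ha.1 hb.1, fun x hx => by
    show a (b x) = x
    rw [hb.2 x hx, ha.2 x hx]⟩
  inv_mem' := fun {a} ha => ⟨G.inv_mem ha.1, fun x hx => by
    conv_lhs => rw [← ha.2 x hx]
    exact a.symm_apply_apply x⟩

theorem mem_inertia {G : Subgroup (RingAut K)} {σ : RingAut K} :
    σ ∈ F.inertia G ↔ σ ∈ G ∧ ∀ x ∈ F.comp 1, σ x = x := Iff.rfl

end GradedField

/-- A subring `S` containing a subring `L`, viewed as an `L`-submodule of the ambient ring. -/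
def Subring.toSubmoduleOver {K : Type*} [CommRing K] (L S : Subring K) (hLS : L ≤ S) :
    Submodule ↥L K where
  carrier := S
  add_mem' := fun ha hb => S.add_mem ha hb
  zero_mem' := S.zero_mem
  smul_mem' := fun c x hx => S.mul_mem (hLS c.2) hx

section ZR

variable {H : Type*} [CommGroup H] [DecidableEq H] {K : Type*} [CommRing K]

/-- The Zariski–Riemann space of graded valuation rings of `K` containing `k₀`. -/
def GradedField.ZR (F : GradedField H K) (k₀ : Subring K) : Type _ :=
  {O : Subring K // F.IsGradedValRing ⊤ O ∧ k₀ ≤ O}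

/-- The set of homogeneous units (nonzero homogeneous elements) of `K`. -/
def GradedField.HomogUnits (F : GradedField H K) : Type _ :=
  {x : K // x ≠ 0 ∧ F.Homogeneous x}

open Classical in
/-- The embedding of the Zariski–Riemann space into `{0,1}^{K^×}` via characteristic
functions. -/
noncomputable def GradedField.chi (F : GradedField H K) (k₀ : Subring K) (O : F.ZR k₀) :
    F.HomogUnits → Bool :=
  fun x => decide (x.1 ∈ O.1)

/-- Basic open sets `P{F}∖{G}` of the constructible topology, for finite sets `F`, `G` of
homogeneous units. -/
def GradedField.constructibleBasis (F : GradedField H K) (k₀ : Subring K) :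
    Set (Set (F.ZR k₀)) :=
  {s | ∃ Fs Gs : Finset K, (∀ a ∈ Fs, a ≠ 0 ∧ F.Homogeneous a) ∧
    (∀ b ∈ Gs, b ≠ 0 ∧ F.Homogeneous b) ∧
    s = {O : F.ZR k₀ | (∀ a ∈ Fs, a ∈ O.1) ∧ ∀ b ∈ Gs, b ∉ O.1}}

/-- The constructible topology on the Zariski–Riemann space. -/
def GradedField.constructibleTop (F : GradedField H K) (k₀ : Subring K) :
    TopologicalSpace (F.ZR k₀) :=
  TopologicalSpace.generateFrom (F.constructibleBasis k₀)


namespace GradedField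

variable {H : Type*} [CommGroup H] [DecidableEq H] {K : Type*} [CommRing K]
variable {F : GradedField H K}

theorem nontrivialK (F : GradedField H K) : Nontrivial K := ⟨⟨0, 1, F.zero_ne_one⟩⟩

theorem isUnit_of_homog {h : H} {x : K} (hx : x ∈ F.comp h) (hx0 : x ≠ 0) : IsUnit x := by
  obtain ⟨y, _, hxy⟩ := F.inv_mem hx hx0
  exact IsUnit.of_mul_eq_one y hxy

theorem inverse_mem_of_homog {h : H} {x : K} (hx : x ∈ F.comp h) (hx0 : x ≠ 0) :
    Ring.inverse x ∈ F.comp h⁻¹ := by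
  obtain ⟨y, hy, hxy⟩ := F.inv_mem hx hx0
  have hu := IsUnit.of_mul_eq_one y hxy
  have : Ring.inverse x = y := by
    calc Ring.inverse x = Ring.inverse x * (x * y) := by rw [hxy, mul_one]
      _ = Ring.inverse x * x * y := by ring
      _ = y := by rw [Ring.inverse_mul_cancel x hu, one_mul]
  rw [this]; exact hy

theorem homog_mul_ne_zero {g h : H} {x y : K} (hx : x ∈ F.comp g) (hy : y ∈ F.comp h)
    (hx0 : x ≠ 0) (hy0 : y ≠ 0) : x * y ≠ 0 := by
  have : Nontrivial K := nontrivialK F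
  exact ((isUnit_of_homog hx hx0).mul (isUnit_of_homog hy hy0)).ne_zero

theorem pow_mem_comp {h : H} {x : K} (hx : x ∈ F.comp h) (n : ℕ) : x ^ n ∈ F.comp (h ^ n) := by
  induction n with
  | zero => simpa using F.one_mem
  | succ n ih => rw [pow_succ, pow_succ]; exact F.mul_mem ih hx

theorem pow_ne_zero_of_homog {h : H} {x : K} (hx : x ∈ F.comp h) (hx0 : x ≠ 0) (n : ℕ) :
    x ^ n ≠ 0 := by
  have : Nontrivial K := nontrivialK F
  exact ((isUnit_of_homog hx hx0).pow n).ne_zero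

/-- Key computation lemma: the decomposition of a finite sum of homogeneous elements. -/
theorem component_of_rep (s : Finset H) (y : H → K) (hy : ∀ h ∈ s, y h ∈ F.comp h)
    (x : K) (hx : x = ∑ h ∈ s, y h) (δ : H) :
    F.component δ x = if δ ∈ s then y δ else 0 := by
  classical
  have hd : F.decompose x
      = ∑ h ∈ s.attach, DirectSum.of (fun h : H => ↥(F.comp h)) h.1 ⟨y h.1, hy h.1 h.2⟩ := by
    have : x = DirectSum.coeAddMonoidHom F.comp
        (∑ h ∈ s.attach, DirectSum.of (fun h : H => ↥(F.comp h)) h.1 ⟨y h.1, hy h.1 h.2⟩) := by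
      rw [map_sum]
      simp only [DirectSum.coeAddMonoidHom_of]
      rw [hx, ← Finset.sum_attach s y]
    exact (Equiv.ofBijective _ F.isInternal).symm_apply_eq.mpr this
  unfold component
  rw [hd, DFinsupp.finset_sum_apply]
  by_cases hδ : δ ∈ s
  · rw [if_pos hδ]
    have key : (∑ a ∈ s.attach,
        ((DirectSum.of (fun h : H => ↥(F.comp h)) a.1) ⟨y a.1, hy a.1 a.2⟩) δ)
        = ((DirectSum.of (fun h : H => ↥(F.comp h)) δ) ⟨y δ, hy δ hδ⟩) δ := by
      refine Finset.sum_eq_single_of_mem (⟨δ, hδ⟩ : {x // x ∈ s}) (s.mem_attach _) ?_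
      intro b _ hb
      exact DirectSum.of_eq_of_ne _ _ _ (fun e => hb (Subtype.ext e.symm))
    rw [key, DirectSum.of_eq_same]
  · rw [if_neg hδ]
    have key : (∑ a ∈ s.attach,
        ((DirectSum.of (fun h : H => ↥(F.comp h)) a.1) ⟨y a.1, hy a.1 a.2⟩) δ)
        = 0 := by
      refine Finset.sum_eq_zero ?_
      intro b _
      exact DirectSum.of_eq_of_ne _ _ _ (fun e => hδ (by rw [e]; exact b.2))
    rw [key]
    rfl

theorem component_mem (x : K) (δ : H) : F.component δ x ∈ F.comp δ := (F.decompose x δ).2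

/-- Every element is the sum of finitely many homogeneous elements. -/
theorem exists_rep (x : K) : ∃ (s : Finset H) (y : H → K),
    (∀ h ∈ s, y h ∈ F.comp h) ∧ x = ∑ h ∈ s, y h := by
  classical
  obtain ⟨d, hd⟩ := F.isInternal.surjective x
  refine ⟨d.support, fun h => (d h : K), fun h _ => (d h).2, ?_⟩
  rw [← hd]
  conv_lhs => rw [← DirectSum.sum_support_of d]
  rw [map_sum]
  simp only [DirectSum.coeAddMonoidHom_of]

/-- Uniqueness: a sum of homogeneous elements of distinct degrees vanishes iff all terms do. -/
theorem rep_eq_zero (s : Finset H) (y : H → K) (hy : ∀ h ∈ s, y h ∈ F.comp h)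
    (hsum : ∑ h ∈ s, y h = 0) : ∀ h ∈ s, y h = 0 := by
  intro h hs
  have := component_of_rep s y hy 0 hsum.symm h
  have h0 : F.component h (0 : K) = 0 := by
    have := component_of_rep (F := F) (∅ : Finset H) y (by simp) 0 (by simp) h
    simpa using this
  rw [h0, if_pos hs] at this
  exact this.symm

end GradedField

namespace GradedField

variable {H : Type*} [CommGroup H] [DecidableEq H] {K : Type*} [CommRing K]
variable {F : GradedField H K}

/-- Normal form: elements of the closure of a union of degreewise subgroups are finite sums
of homogeneous pieces. -/
theorem nf_of_closure (P : H → AddSubgroup K) {x : K}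
    (hx : x ∈ AddSubgroup.closure (⋃ h, (P h : Set K))) :
    ∃ (s : Finset H) (y : H → K), (∀ h ∈ s, y h ∈ P h) ∧ x = ∑ h ∈ s, y h := by
  classical
  refine AddSubgroup.closure_induction (p := fun z _ => ∃ (s : Finset H) (y : H → K),
      (∀ h ∈ s, y h ∈ P h) ∧ z = ∑ h ∈ s, y h) ?_ ?_ ?_ ?_ hx
  · intro z hz
    obtain ⟨_, ⟨h, rfl⟩, hzh⟩ := hz
    refine ⟨{h}, fun _ => z, fun g hg => ?_, by simp⟩
    simp only [Finset.mem_singleton] at hg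
    subst hg; exact hzh
  · exact ⟨∅, fun _ => 0, by simp, by simp⟩
  · rintro a b _ _ ⟨s₁, y₁, hy₁, rfl⟩ ⟨s₂, y₂, hy₂, rfl⟩
    refine ⟨s₁ ∪ s₂, fun h => (if h ∈ s₁ then y₁ h else 0) + (if h ∈ s₂ then y₂ h else 0),
      ?_, ?_⟩
    · intro h _
      refine (P h).add_mem ?_ ?_
      · split_ifs with h1; exacts [hy₁ h h1, (P h).zero_mem]
      · split_ifs with h2; exacts [hy₂ h h2, (P h).zero_mem]
    · rw [Finset.sum_add_distrib, Finset.sum_ite_mem, Finset.sum_ite_mem,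
        Finset.union_inter_cancel_left, Finset.union_inter_cancel_right]
  · rintro a _ ⟨s, y, hy, rfl⟩
    exact ⟨s, fun h => -(y h), fun h hs => (P h).neg_mem (hy h hs),
      by rw [Finset.sum_neg_distrib]⟩

/-- Elements of a graded subring decompose into homogeneous elements of the subring. -/
theorem rep_of_gradedSubring {L : Subring K} (hG : F.IsGradedSubring L) {x : K} (hx : x ∈ L) :
    ∃ (s : Finset H) (y : H → K), (∀ h ∈ s, y h ∈ L ∧ y h ∈ F.comp h) ∧ x = ∑ h ∈ s, y h := by
  have h1 := hG x hx
  have h2 : x ∈ AddSubgroup.closure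
      (⋃ h, ((L.toAddSubgroup ⊓ (F.comp h) : AddSubgroup K) : Set K)) := by
    refine AddSubgroup.closure_mono ?_ h1
    rintro y ⟨hyL, h, hyh⟩
    exact Set.mem_iUnion.mpr ⟨h, AddSubgroup.mem_inf.mpr ⟨hyL, hyh⟩⟩
  obtain ⟨s, y, hy, rfl⟩ := nf_of_closure _ h2
  exact ⟨s, y, fun h hs => AddSubgroup.mem_inf.mp (hy h hs), rfl⟩

/-- Homogeneous components of elements of a graded subring lie in the subring. -/
theorem component_mem_of_gradedSubring {L : Subring K} (hG : F.IsGradedSubring L) {x : K}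
    (hx : x ∈ L) (δ : H) : F.component δ x ∈ L := by
  obtain ⟨s, y, hy, rfl⟩ := rep_of_gradedSubring hG hx
  rw [component_of_rep s y (fun h hs => (hy h hs).2) _ rfl δ]
  split_ifs with hδ
  · exact (hy δ hδ).1
  · exact L.zero_mem

theorem decompose_add (a b : K) :
    F.decompose (a + b) = F.decompose a + F.decompose b := by
  apply F.isInternal.injective
  have hc : ∀ z : K, (DirectSum.coeAddMonoidHom F.comp) (F.decompose z) = z := fun z =>
    (Equiv.ofBijective _ F.isInternal).apply_symm_apply z
  rw [map_add, hc, hc, hc]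

theorem component_add (δ : H) (a b : K) :
    F.component δ (a + b) = F.component δ a + F.component δ b := by
  unfold component
  rw [decompose_add]
  rfl

theorem component_zero (δ : H) : F.component δ (0 : K) = 0 := by
  have := component_of_rep (F := F) (∅ : Finset H) (fun _ => 0) (by simp) 0 (by simp) δ
  simpa using this

theorem component_sum {ι : Type*} (δ : H) (s : Finset ι) (f : ι → K) :
    F.component δ (∑ i ∈ s, f i) = ∑ i ∈ s, F.component δ (f i) := by
  classical
  induction s using Finset.induction_on with
  | empty => simpa using component_zero δ
  | insert _ _ hns ih =>
      rw [Finset.sum_insert hns, Finset.sum_insert hns, component_add, ih]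

/-- Multiplying by a homogeneous element shifts components. -/
theorem component_mul_homog {c x : K} {h : H} (hx : x ∈ F.comp h) (δ : H) :
    F.component δ (c * x) = F.component (δ * h⁻¹) c * x := by
  classical
  obtain ⟨t, z, hz, rfl⟩ := exists_rep (F := F) c
  have hrep : (∑ g ∈ t, z g) * x = ∑ δ' ∈ t.image (· * h), z (δ' * h⁻¹) * x := by
    rw [Finset.sum_image (fun a _ b _ e => by
      have := mul_right_cancel e; exact this)]
    rw [Finset.sum_mul]
    refine Finset.sum_congr rfl fun g hg => ?_
    rw [mul_inv_cancel_right]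
  have hmem : ∀ δ' ∈ t.image (· * h), z (δ' * h⁻¹) * x ∈ F.comp δ' := by
    intro δ' hδ'
    obtain ⟨g, hg, rfl⟩ := Finset.mem_image.mp hδ'
    rw [mul_inv_cancel_right]
    have := F.mul_mem (hz g hg) hx
    exact this
  rw [component_of_rep _ _ hmem _ hrep δ,
    component_of_rep t z hz _ rfl (δ * h⁻¹)]
  have hiff : δ ∈ t.image (· * h) ↔ δ * h⁻¹ ∈ t := by
    constructor
    · rintro hδ
      obtain ⟨g, hg, rfl⟩ := Finset.mem_image.mp hδ
      rwa [mul_inv_cancel_right]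
    · intro hδ
      exact Finset.mem_image.mpr ⟨δ * h⁻¹, hδ, by rw [inv_mul_cancel_right]⟩
  split_ifs with h1 h2 h2
  · rfl
  · exact absurd (hiff.mp h1) h2
  · exact absurd (hiff.mpr h2) h1
  · rw [zero_mul]

end GradedField

namespace GradedField

variable {H : Type*} [CommGroup H] [DecidableEq H] {K : Type*} [CommRing K]
variable {F : GradedField H K}

theorem mem_valueGroup_iff {L : Subring K}
    (hLi : ∀ x ∈ L, F.Homogeneous x → x ≠ 0 → Ring.inverse x ∈ L) {h : H} :
    h ∈ F.valueGroup L hLi ↔ ∃ x ∈ F.comp h, x ≠ 0 ∧ x ∈ L := Iff.rfl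

theorem mem_fullValueGroup_iff {h : H} :
    h ∈ F.fullValueGroup ↔ ∃ x ∈ F.comp h, x ≠ 0 := by
  constructor
  · rintro ⟨x, hx, h0, -⟩; exact ⟨x, hx, h0⟩
  · rintro ⟨x, hx, h0⟩; exact ⟨x, hx, h0, Subring.mem_top x⟩

/-- A homogeneous element whose degree is in the value group of `L` lies in `L`. -/
theorem homog_mem_of_deg_mem {L : Subring K} (hL : F.IsGradedSubfield L)
    (hf : F.oneComponent ≤ L) {g : H} {x : K} (hx : x ∈ F.comp g)
    (hg : g ∈ F.valueGroup L hL.inv_mem) : x ∈ L := by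
  obtain ⟨z, hz, hz0, hzL⟩ := hg
  have hwL : Ring.inverse z ∈ L := hL.inv_mem z hzL ⟨g, hz⟩ hz0
  have hw : Ring.inverse z ∈ F.comp g⁻¹ := inverse_mem_of_homog hz hz0
  have hxw : x * Ring.inverse z ∈ F.comp 1 := by
    have := F.mul_mem hx hw
    rwa [mul_inv_cancel] at this
  have hxwL : x * Ring.inverse z ∈ L := hf hxw
  have hx' : x = x * Ring.inverse z * z := by
    rw [mul_assoc, Ring.inverse_mul_cancel z (isUnit_of_homog hz hz0), mul_one]
  rw [hx']
  exact L.mul_mem hxwL hzL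

/-- In a graded valuation ring, homogeneous elements of `L` with a power in `R` lie in `R`. -/
theorem mem_of_pow_mem {L R : Subring K} (hR : F.IsGradedValRing L R) {x : K} {g : H}
    (hx : x ∈ F.comp g) (hxL : x ∈ L) {n : ℕ} (hn : 0 < n) (hp : x ^ n ∈ R) : x ∈ R := by
  by_cases hx0 : x = 0
  · subst hx0; exact R.zero_mem
  rcases hR.2.2 x hxL ⟨g, hx⟩ hx0 with h | h
  · exact h
  · have hu := isUnit_of_homog hx hx0
    have h1 : x * Ring.inverse x = 1 := Ring.mul_inverse_cancel x hu
    have hxeq : x = x ^ n * (Ring.inverse x) ^ (n - 1) := by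
      calc x = x * (x * Ring.inverse x) ^ (n - 1) := by rw [h1, one_pow, mul_one]
        _ = x ^ (1 + (n - 1)) * (Ring.inverse x) ^ (n - 1) := by
            rw [mul_pow, pow_add, pow_one]; ring
        _ = x ^ n * (Ring.inverse x) ^ (n - 1) := by rw [Nat.add_sub_cancel' hn]
    rw [hxeq]
    exact R.mul_mem hp (R.pow_mem h _)

end GradedField

namespace GradedField

variable {H : Type*} [CommGroup H] [DecidableEq H] {K : Type*} [CommRing K]
variable {F : GradedField H K}

/-- The key index computation: if `[K : L] = e` and `K₁ ⊆ L`, then the `e`-th power of any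
degree occurring in `K` is a degree occurring in `L`. -/
theorem pow_deg_mem {L : Subring K} (hL : F.IsGradedSubfield L) (hf : F.oneComponent ≤ L)
    {e : ℕ} (hrank : Module.rank ↥L K = e) {g : H}
    (hg : g ∈ F.fullValueGroup) : g ^ e ∈ F.valueGroup L hL.inv_mem := by
  classical
  haveI : Nontrivial K := F.nontrivialK
  haveI : Nontrivial ↥L :=
    ⟨⟨0, 1, fun h0 => F.zero_ne_one (congrArg Subtype.val h0)⟩⟩
  set SK := F.fullValueGroup with hSKdef
  set T := F.valueGroup L hL.inv_mem with hTdef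
  set T' : Subgroup ↥SK := T.subgroupOf SK with hT'def
  haveI : T'.Normal := Subgroup.normal_of_comm T'
  have hpick : ∀ u : ↥SK, ∃ x : K, x ∈ F.comp u.1 ∧ x ≠ 0 := by
    rintro ⟨u, hu⟩
    obtain ⟨x, hx, h0, -⟩ := hu
    exact ⟨x, hx, h0⟩
  choose pick hpick1 hpick2 using hpick
  set b : (↥SK ⧸ T') → K := fun q => pick (Quotient.out q) with hbdef
  -- linear independence
  have hli : LinearIndependent ↥L b := by
    rw [linearIndependent_iff']
    intro s c hsum q₀ hq₀
    obtain ⟨t, z, hz, hc⟩ := rep_of_gradedSubring hL.graded (c q₀).2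
    have hzzero : ∀ g' ∈ t, z g' = 0 := by
      intro g' hgt
      by_contra hzg
      have hgT : g' ∈ T := ⟨z g', (hz g' hgt).2, hzg, (hz g' hgt).1⟩
      set δ := g' * (Quotient.out q₀).1 with hδdef
      have h0 : F.component δ (∑ i ∈ s, c i • b i) = 0 := by rw [hsum, component_zero]
      rw [component_sum] at h0
      have hterm : ∀ i ∈ s, i ≠ q₀ → F.component δ (c i • b i) = 0 := by
        intro i _ hne
        have hsm : (c i • b i : K) = (c i : K) * b i := rfl
        rw [hsm, component_mul_homog (hpick1 (Quotient.out i)) δ]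
        have hcomp0 : F.component (δ * ((Quotient.out i).1)⁻¹) ((c i : K)) = 0 := by
          by_contra hcomp
          apply hne
          have hmemL : F.component (δ * ((Quotient.out i).1)⁻¹) ((c i : K)) ∈ L :=
            component_mem_of_gradedSubring hL.graded (c i).2 _
          have hdT : δ * ((Quotient.out i).1)⁻¹ ∈ T :=
            ⟨_, component_mem _ _, hcomp, hmemL⟩
          have h2 : (Quotient.out q₀).1 * ((Quotient.out i).1)⁻¹ ∈ T := by
            have h3 := T.mul_mem (T.inv_mem hgT) hdT
            rwa [hδdef, ← mul_assoc, ← mul_assoc, inv_mul_cancel, one_mul] at h3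
          have h4 : ((Quotient.out i)⁻¹ * (Quotient.out q₀) : ↥SK) ∈ T' := by
            rw [Subgroup.mem_subgroupOf]
            have : (((Quotient.out i)⁻¹ * (Quotient.out q₀) : ↥SK) : H)
                = ((Quotient.out i).1)⁻¹ * (Quotient.out q₀).1 := rfl
            rw [this, mul_comm]
            exact h2
          have h5 : ((Quotient.out i : ↥SK) : ↥SK ⧸ T')
              = ((Quotient.out q₀ : ↥SK) : ↥SK ⧸ T') := QuotientGroup.eq.mpr h4
          rw [QuotientGroup.out_eq', QuotientGroup.out_eq'] at h5
          exact h5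
        rw [hcomp0, zero_mul]
      have h3 : F.component δ (c q₀ • b q₀) = 0 := by
        rwa [Finset.sum_eq_single_of_mem q₀ hq₀ hterm] at h0
      have hsm : (c q₀ • b q₀ : K) = (c q₀ : K) * b q₀ := rfl
      rw [hsm, component_mul_homog (hpick1 (Quotient.out q₀)) δ] at h3
      have hδg : δ * ((Quotient.out q₀).1)⁻¹ = g' := by
        rw [hδdef, mul_inv_cancel_right]
      rw [hδg] at h3
      have hcg : F.component g' ((c q₀ : K)) = z g' := by
        rw [component_of_rep t z (fun h hs => (hz h hs).2) _ hc g', if_pos hgt]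
      rw [hcg] at h3
      have hb0 := hpick2 (Quotient.out q₀)
      have hbh := hpick1 (Quotient.out q₀)
      have h1 : b q₀ * Ring.inverse (b q₀) = 1 :=
        Ring.mul_inverse_cancel _ (isUnit_of_homog hbh hb0)
      have hzg0 : z g' = 0 := by
        calc z g' = z g' * (b q₀ * Ring.inverse (b q₀)) := by rw [h1, mul_one]
          _ = (z g' * b q₀) * Ring.inverse (b q₀) := by ring
          _ = 0 := by rw [h3, zero_mul]
      exact hzg hzg0
    have hcq : (c q₀ : K) = 0 := by rw [hc]; exact Finset.sum_eq_zero hzzero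
    exact Subtype.ext hcq
  -- spanning
  have hsp : ⊤ ≤ Submodule.span ↥L (Set.range b) := by
    intro x _
    obtain ⟨s, y, hy, rfl⟩ := exists_rep (F := F) x
    refine Submodule.sum_mem _ fun h hs => ?_
    by_cases hy0 : y h = 0
    · rw [hy0]; exact Submodule.zero_mem _
    have hhS : h ∈ SK := ⟨y h, hy h hs, hy0, Subring.mem_top _⟩
    set u : ↥SK := ⟨h, hhS⟩ with hudef
    set q : ↥SK ⧸ T' := (u : ↥SK ⧸ T') with hqdef
    have hq1 : ((Quotient.out q : ↥SK) : ↥SK ⧸ T') = (u : ↥SK ⧸ T') :=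
      QuotientGroup.out_eq' q
    have hmem' : ((Quotient.out q)⁻¹ * u : ↥SK) ∈ T' := QuotientGroup.eq.mp hq1
    have hmemT : h * ((Quotient.out q).1)⁻¹ ∈ T := by
      have h2 : (((Quotient.out q)⁻¹ * u : ↥SK) : H) ∈ T :=
        Subgroup.mem_subgroupOf.mp hmem'
      have h3 : (((Quotient.out q)⁻¹ * u : ↥SK) : H)
          = ((Quotient.out q).1)⁻¹ * h := rfl
      rw [h3, mul_comm] at h2
      exact h2
    obtain ⟨z, hzc, hz0, hzL⟩ := hmemT
    have hxqh := hpick1 (Quotient.out q)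
    have hxq0 := hpick2 (Quotient.out q)
    have hzxq : z * b q ∈ F.comp h := by
      have h4 := F.mul_mem hzc hxqh
      rwa [inv_mul_cancel_right] at h4
    have hzxq0 : z * b q ≠ 0 := homog_mul_ne_zero hzc hxqh hz0 hxq0
    have hw : Ring.inverse (z * b q) ∈ F.comp h⁻¹ := inverse_mem_of_homog hzxq hzxq0
    have hcK1 : y h * Ring.inverse (z * b q) ∈ F.comp 1 := by
      have h5 := F.mul_mem (hy h hs) hw
      rwa [mul_inv_cancel] at h5
    have hcoef : (y h * Ring.inverse (z * b q)) * z ∈ L := L.mul_mem (hf hcK1) hzL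
    have heq : y h = ((y h * Ring.inverse (z * b q)) * z) * b q := by
      rw [mul_assoc, mul_assoc, Ring.inverse_mul_cancel _ (isUnit_of_homog hzxq hzxq0),
        mul_one]
    rw [heq]
    exact Submodule.smul_mem _ (⟨_, hcoef⟩ : ↥L) (Submodule.subset_span ⟨q, rfl⟩)
  -- cardinality
  let B : Module.Basis (↥SK ⧸ T') ↥L K := Module.Basis.mk hli hsp
  have hcard : Cardinal.mk (↥SK ⧸ T') = e := by
    have h1 := Module.Basis.mk_eq_rank B
    rw [hrank, Cardinal.lift_natCast] at h1
    exact Cardinal.lift_eq_nat_iff.mp h1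
  have hfin : Finite (↥SK ⧸ T') := by
    rw [← Cardinal.lt_aleph0_iff_finite, hcard]
    exact Cardinal.nat_lt_aleph0 e
  have hNat : Nat.card (↥SK ⧸ T') = e := by
    have h6 := congrArg Cardinal.toNat hcard
    rwa [Cardinal.toNat_natCast] at h6
  have hpow : ((⟨g, hg⟩ : ↥SK) : ↥SK ⧸ T') ^ e = 1 := by
    rw [← hNat]
    exact pow_card_eq_one'
  have hpow2 : (((⟨g, hg⟩ : ↥SK) ^ e : ↥SK) : ↥SK ⧸ T') = 1 := by
    rw [← hpow]
    exact map_pow (QuotientGroup.mk' T') _ e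
  have hmemT' : ((⟨g, hg⟩ : ↥SK) ^ e : ↥SK) ∈ T' := (QuotientGroup.eq_one_iff _).mp hpow2
  have := Subgroup.mem_subgroupOf.mp hmemT'
  have hcoe : (((⟨g, hg⟩ : ↥SK) ^ e : ↥SK) : H) = g ^ e := by
    rw [SubmonoidClass.coe_pow]
  rwa [hcoe] at this

end GradedField

namespace GradedField

variable {H : Type*} [CommGroup H] [DecidableEq H] {K : Type*} [CommRing K]
variable {F : GradedField H K}

/-- A graded subring is contained in any subring containing its homogeneous elements. -/
theorem le_of_homog_le {A B : Subring K} (hA : F.IsGradedSubring A)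
    (hhom : ∀ {h : H} {x : K}, x ∈ F.comp h → x ∈ A → x ∈ B) : A ≤ B := by
  intro x hx
  obtain ⟨s, y, hy, rfl⟩ := rep_of_gradedSubring hA hx
  exact B.sum_mem fun h hs => hhom (hy h hs).2 (hy h hs).1

/-- Any extension of `R` to a graded valuation ring of `K` satisfies the `e`-th power
membership criterion. -/
theorem ext_char {L R A : Subring K} (hL : F.IsGradedSubfield L) (hf : F.oneComponent ≤ L)
    {e : ℕ} (he : 0 < e) (hrank : Module.rank ↥L K = e)
    (hA : F.IsGradedValRing ⊤ A) (hAL : A ⊓ L = R) {h : H} {a : K}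
    (ha : a ∈ F.comp h) : a ∈ A ↔ a ^ e ∈ R := by
  have hRA : R ≤ A := by rw [← hAL]; exact inf_le_left
  constructor
  · intro haA
    by_cases ha0 : a = 0
    · subst ha0
      rw [zero_pow he.ne', ← hAL]
      exact ⟨A.zero_mem, L.zero_mem⟩
    · have hS : h ∈ F.fullValueGroup := ⟨a, ha, ha0, Subring.mem_top _⟩
      have hT : h ^ e ∈ F.valueGroup L hL.inv_mem := pow_deg_mem hL hf hrank hS
      have haeL : a ^ e ∈ L := homog_mem_of_deg_mem hL hf (pow_mem_comp ha e) hT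
      rw [← hAL]
      exact ⟨A.pow_mem haA e, haeL⟩
  · intro hae
    exact mem_of_pow_mem hA ha (Subring.mem_top a) he (hRA hae)

end GradedField

/-- Let `K/L` be a finite extension of `H`-graded fields with `f_{K/L} = 1` (i.e. `K₁ = L₁`,
expressed as `K₁ ≤ L`), of degree `e = [K:L]`, and let `R` be a graded valuation ring of `L`.
Then `R` admits a unique extension `A` to a graded valuation ring of `K`, characterized by:
a homogeneous `a ∈ K` lies in `A` iff `a ^ e ∈ R`.  Moreover extensions are monotone: if
`R ⊆ R'` are graded valuation rings of `L` with extensions `A`, `A'`, then `A ⊆ A'`. -/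
theorem GradedField.unique_extension_totally_ramified {H : Type*} [CommGroup H]
    [DecidableEq H] {K : Type*} [CommRing K] (F : GradedField H K) (L : Subring K)
    (hL : F.IsGradedSubfield L) (hf : F.oneComponent ≤ L) (e : ℕ) (he : 0 < e)
    (hrank : Module.rank ↥L K = e) (R : Subring K) (hR : F.IsGradedValRing L R) :
    (∃ A : Subring K, (F.IsGradedValRing ⊤ A ∧ A ⊓ L = R) ∧
      (∀ (h : H) (a : K), a ∈ F.comp h → (a ∈ A ↔ a ^ e ∈ R)) ∧
      ∀ A' : Subring K, F.IsGradedValRing ⊤ A' ∧ A' ⊓ L = R → A' = A) ∧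
    ∀ R' : Subring K, F.IsGradedValRing L R' → R ≤ R' →
      ∀ A A' : Subring K, F.IsGradedValRing ⊤ A ∧ A ⊓ L = R →
        F.IsGradedValRing ⊤ A' ∧ A' ⊓ L = R' → A ≤ A' := by
  classical
  have hTpow : ∀ {g : H}, g ∈ F.fullValueGroup → g ^ e ∈ F.valueGroup L hL.inv_mem :=
    fun hg => pow_deg_mem hL hf hrank hg
  -- the subgroup of degree-`h` elements whose `e`-th power lies in `R`
  have hS₀add : ∀ (h : H) {a b : K}, a ∈ F.comp h → b ∈ F.comp h → a ^ e ∈ R → b ^ e ∈ R →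
      (a + b) ^ e ∈ R := by
    intro h a b ha hb hae hbe
    rw [add_pow]
    refine R.sum_mem fun i hi => ?_
    refine R.mul_mem ?_ (natCast_mem R _)
    have hie : i ≤ e := Finset.mem_range_succ_iff.mp hi
    -- a ^ i * b ^ (e - i) ∈ R
    by_cases hab : a ^ i * b ^ (e - i) = 0
    · rw [hab]; exact R.zero_mem
    have hia : a ≠ 0 ∨ i = 0 := by
      rcases eq_or_ne i 0 with h0 | h0
      · exact Or.inr h0
      · refine Or.inl fun ha0 => hab ?_
        rw [ha0, zero_pow h0, zero_mul]
    have hp : a ^ i * b ^ (e - i) ∈ F.comp (h ^ e) := by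
      have h1 := F.mul_mem (pow_mem_comp ha i) (pow_mem_comp hb (e - i))
      rwa [← pow_add, Nat.add_sub_cancel' hie] at h1
    have hpe : (a ^ i * b ^ (e - i)) ^ e ∈ R := by
      have : (a ^ i * b ^ (e - i)) ^ e = (a ^ e) ^ i * (b ^ e) ^ (e - i) := by
        rw [mul_pow, ← pow_mul, ← pow_mul, ← pow_mul, ← pow_mul, Nat.mul_comm i e,
          Nat.mul_comm (e - i) e]
      rw [this]
      exact R.mul_mem (R.pow_mem hae i) (R.pow_mem hbe (e - i))
    -- show membership in L, then use the valuation root lemma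
    have hb0 : b ≠ 0 ∨ i = e := by
      rcases eq_or_ne i e with h0 | h0
      · exact Or.inr h0
      · refine Or.inl fun hb0 => hab ?_
        rw [hb0, zero_pow (by omega : e - i ≠ 0), mul_zero]
    have hhS : h ∈ F.fullValueGroup := by
      rcases hia with ha0 | h0
      · exact ⟨a, ha, ha0, Subring.mem_top _⟩
      · rcases hb0 with hb0 | h0'
        · exact ⟨b, hb, hb0, Subring.mem_top _⟩
        · omega
    have hpL : a ^ i * b ^ (e - i) ∈ L := homog_mem_of_deg_mem hL hf hp (hTpow hhS)
    exact mem_of_pow_mem hR hp hpL he hpe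
  let S₀ : H → AddSubgroup K := fun h =>
    { carrier := {a : K | a ∈ F.comp h ∧ a ^ e ∈ R}
      zero_mem' := ⟨(F.comp h).zero_mem, by rw [zero_pow he.ne']; exact R.zero_mem⟩
      add_mem' := fun {a b} ha hb => ⟨(F.comp h).add_mem ha.1 hb.1, hS₀add h ha.1 hb.1 ha.2 hb.2⟩
      neg_mem' := fun {a} ha => ⟨(F.comp h).neg_mem ha.1, by
        rw [neg_pow]
        exact R.mul_mem (R.pow_mem (R.neg_mem R.one_mem) e) ha.2⟩ }
  have hS₀mem : ∀ {h : H} {a : K}, a ∈ S₀ h ↔ a ∈ F.comp h ∧ a ^ e ∈ R := Iff.rfl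
  set Acar : AddSubgroup K := AddSubgroup.closure (⋃ h, (S₀ h : Set K)) with hAcar
  have hgen : ∀ {h : H} {a : K}, a ∈ F.comp h → a ^ e ∈ R → a ∈ Acar := by
    intro h a h1 h2
    exact AddSubgroup.subset_closure (Set.mem_iUnion.mpr ⟨h, h1, h2⟩)
  have hmul : ∀ x ∈ Acar, ∀ y ∈ Acar, x * y ∈ Acar := by
    intro x hx
    refine AddSubgroup.closure_induction
      (p := fun x _ => ∀ y ∈ Acar, x * y ∈ Acar) ?_ ?_ ?_ ?_ hx
    · intro x hxg y hy
      refine AddSubgroup.closure_induction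
        (p := fun y _ => x * y ∈ Acar) ?_ ?_ ?_ ?_ hy
      · intro y hyg
        show x * y ∈ Acar
        obtain ⟨_, ⟨g, rfl⟩, hxg1, hxg2⟩ := hxg
        obtain ⟨_, ⟨h, rfl⟩, hyg1, hyg2⟩ := hyg
        refine hgen (F.mul_mem hxg1 hyg1) ?_
        rw [mul_pow]
        exact R.mul_mem hxg2 hyg2
      · show x * 0 ∈ Acar
        rw [mul_zero]; exact Acar.zero_mem
      · intro a b _ _ h1 h2
        show x * (a + b) ∈ Acar
        rw [mul_add]; exact Acar.add_mem h1 h2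
      · intro a _ h1
        show x * -a ∈ Acar
        rw [mul_neg]; exact Acar.neg_mem h1
    · intro y _
      show 0 * y ∈ Acar
      rw [zero_mul]; exact Acar.zero_mem
    · intro a b _ _ h1 h2 y hy
      show (a + b) * y ∈ Acar
      rw [add_mul]; exact Acar.add_mem (h1 y hy) (h2 y hy)
    · intro a _ h1 y hy
      show -a * y ∈ Acar
      rw [neg_mul]; exact Acar.neg_mem (h1 y hy)
  let A : Subring K :=
    { carrier := Acar
      one_mem' := hgen F.one_mem (by rw [one_pow]; exact R.one_mem)
      mul_mem' := fun {a b} ha hb => hmul a ha b hb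
      add_mem' := fun {a b} ha hb => Acar.add_mem ha hb
      zero_mem' := Acar.zero_mem
      neg_mem' := fun {a} ha => Acar.neg_mem ha }
  have hAmem : ∀ {x : K}, x ∈ A ↔ x ∈ Acar := Iff.rfl
  -- homogeneous characterization of A
  have hAhom : ∀ {h : H} {a : K}, a ∈ F.comp h → (a ∈ A ↔ a ^ e ∈ R) := by
    intro h a ha
    constructor
    · intro haA
      obtain ⟨s, y, hy, hrep⟩ := nf_of_closure S₀ (hAmem.mp haA)
      have h1 := component_of_rep (F := F) s y (fun h' hs => (hy h' hs).1) a hrep h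
      have h2 := component_of_rep (F := F) {h} (fun _ => a) (by simpa using ha) a
        (by simp) h
      rw [if_pos (Finset.mem_singleton_self h)] at h2
      rw [h2] at h1
      by_cases hhs : h ∈ s
      · rw [if_pos hhs] at h1
        rw [h1]
        exact (hy h hhs).2
      · rw [if_neg hhs] at h1
        rw [h1, zero_pow he.ne']
        exact R.zero_mem
    · intro hae
      exact hAmem.mpr (hgen ha hae)
  -- A is a graded subring
  have hAgraded : F.IsGradedSubring A := by
    intro x hx
    obtain ⟨s, y, hy, hrep⟩ := nf_of_closure S₀ (hAmem.mp hx)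
    rw [hrep]
    refine AddSubgroup.sum_mem _ fun h hs => ?_
    exact AddSubgroup.subset_closure ⟨hAmem.mpr (hgen (hy h hs).1 (hy h hs).2), h, (hy h hs).1⟩
  -- A is a graded valuation ring of ⊤
  have hAval : F.IsGradedValRing ⊤ A := by
    refine ⟨le_top, hAgraded, ?_⟩
    rintro x - ⟨h, hx⟩ hx0
    have hS : h ∈ F.fullValueGroup := ⟨x, hx, hx0, Subring.mem_top _⟩
    have hxe : x ^ e ∈ F.comp (h ^ e) := pow_mem_comp hx e
    have hxeL : x ^ e ∈ L := homog_mem_of_deg_mem hL hf hxe (hTpow hS)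
    have hxe0 : x ^ e ≠ 0 := pow_ne_zero_of_homog hx hx0 e
    rcases hR.2.2 (x ^ e) hxeL ⟨h ^ e, hxe⟩ hxe0 with hc | hc
    · exact Or.inl ((hAhom hx).mpr hc)
    · refine Or.inr ((hAhom (inverse_mem_of_homog hx hx0)).mpr ?_)
      rw [Ring.inverse_pow]
      exact hc
  -- A ⊓ L = R
  have hAL : A ⊓ L = R := by
    refine le_antisymm ?_ ?_
    · intro x hx
      rw [Subring.mem_inf] at hx
      obtain ⟨s, y, hy, hrep⟩ := nf_of_closure S₀ (hAmem.mp hx.1)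
      rw [hrep]
      refine R.sum_mem fun h hs => ?_
      have hyL : y h ∈ L := by
        have h1 := component_of_rep (F := F) s y (fun h' hs' => (hy h' hs').1) x hrep h
        rw [if_pos hs] at h1
        rw [← h1]
        exact component_mem_of_gradedSubring hL.graded hx.2 h
      exact mem_of_pow_mem hR (hy h hs).1 hyL he (hy h hs).2
    · intro x hx
      rw [Subring.mem_inf]
      refine ⟨?_, hR.1 hx⟩
      obtain ⟨s, y, hy, hrep⟩ := rep_of_gradedSubring hR.2.1 hx
      rw [hrep]
      exact A.sum_mem fun h hs => hAmem.mpr (hgen (hy h hs).2 (R.pow_mem (hy h hs).1 e))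
  refine ⟨⟨A, ⟨hAval, hAL⟩, fun h a ha => hAhom ha, ?_⟩, ?_⟩
  · -- uniqueness
    rintro A' ⟨hA'val, hA'L⟩
    have hchar := fun {h : H} {a : K} (ha : a ∈ F.comp h) =>
      ext_char hL hf he hrank hA'val hA'L ha
    refine le_antisymm ?_ ?_
    · exact le_of_homog_le hA'val.2.1 fun hx hxA' => (hAhom hx).mpr ((hchar hx).mp hxA')
    · exact le_of_homog_le hAgraded fun hx hxA => (hchar hx).mpr ((hAhom hx).mp hxA)
  · -- monotonicity
    rintro R' hR' hRR' A₁ A₁' ⟨hA₁val, hA₁L⟩ ⟨hA₁'val, hA₁'L⟩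
    have hchar1 := fun {h : H} {a : K} (ha : a ∈ F.comp h) =>
      ext_char hL hf he hrank hA₁val hA₁L ha
    have hchar2 := fun {h : H} {a : K} (ha : a ∈ F.comp h) =>
      ext_char hL hf he hrank hA₁'val hA₁'L ha
    exact le_of_homog_le hA₁val.2.1 fun hx hxA =>
      (hchar2 hx).mpr (hRR' ((hchar1 hx).mp hxA))
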